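/- Let u : E → ℝ be measurable with P_t|u| < ∞ pointwise for all t ≥ 0, let (τ_n)_{n≥1} be an admissible sequence of finite partitions of ℝ₊, and set u_i := sup_n u_i^{τ_n} for i = 1, 2. Then: (a) u₁ + u₂ = sup_n V_{τ_n}(u) pointwise; (b) P_r u_i ≤ u_i pointwise for every r ∈ ∪_{k≥1} τ_k and i = 1, 2; (c) u = u₁ − u₂ on the set {sup_n V_{τ_n}(u) < ∞}. -/

import Mathlib

open MeasureTheory ProbabilityTheory ENNReal Filter
open scoped NNReal

/-- A sub-Markovian semigroup of kernels on a measurable space `E`. -/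
structure SubMarkovSemigroup (E : Type*) [MeasurableSpace E] where
  P : ℝ≥0 → Kernel E E
  subMarkov : ∀ t x, P t x Set.univ ≤ 1
  map_zero : ∀ (f : E → ℝ≥0∞), Measurable f → ∀ x, ∫⁻ y, f y ∂(P 0 x) = f x
  map_add : ∀ (t s : ℝ≥0) (f : E → ℝ≥0∞), Measurable f → ∀ x,
      ∫⁻ y, f y ∂(P (t + s) x) = ∫⁻ y, ∫⁻ z, f z ∂(P s y) ∂(P t x)

/-- Action of the time-`t` kernel on real-valued functions: `P_t f = P_t f⁺ - P_t f⁻`. -/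
noncomputable def SubMarkovSemigroup.act {E : Type*} [MeasurableSpace E]
    (S : SubMarkovSemigroup E) (t : ℝ≥0) (f : E → ℝ) (x : E) : ℝ :=
  ∫ y, f y ∂(S.P t x)

namespace SubMarkovSemigroup
variable {E : Type*} [MeasurableSpace E] (S : SubMarkovSemigroup E)

instance (t : ℝ≥0) : IsFiniteKernel (S.P t) :=
  ⟨⟨1, one_lt_top, fun x => S.subMarkov t x⟩⟩

/-- A function which is measurable and integrable with respect to every kernel. -/
def Good (f : E → ℝ) : Prop :=
  Measurable f ∧ ∀ (t : ℝ≥0) (x : E), Integrable f (S.P t x)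

variable {S}

lemma Good.meas {f : E → ℝ} (hf : S.Good f) : Measurable f := hf.1
lemma Good.int {f : E → ℝ} (hf : S.Good f) (t : ℝ≥0) (x : E) :
    Integrable f (S.P t x) := hf.2 t x

lemma P_zero (x : E) : S.P 0 x = Measure.dirac x := by
  ext s hs
  rw [← lintegral_indicator_one hs,
    S.map_zero _ (measurable_one.indicator hs) x, Measure.dirac_apply' _ hs]

lemma act_zero {f : E → ℝ} (hf : Measurable f) (x : E) : S.act 0 f x = f x := by
  rw [act, P_zero, integral_dirac' _ _ hf.stronglyMeasurable]

lemma act_nonneg {f : E → ℝ} (hf : 0 ≤ f) (t : ℝ≥0) (x : E) : 0 ≤ S.act t f x :=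
  integral_nonneg hf

lemma act_mono {f g : E → ℝ} (t : ℝ≥0) (x : E) (hf : Integrable f (S.P t x))
    (hg : Integrable g (S.P t x)) (h : f ≤ g) : S.act t f x ≤ S.act t g x :=
  integral_mono hf hg h

lemma act_add {f g : E → ℝ} (t : ℝ≥0) (x : E) (hf : Integrable f (S.P t x))
    (hg : Integrable g (S.P t x)) :
    S.act t (fun y => f y + g y) x = S.act t f x + S.act t g x :=
  integral_add hf hg

lemma act_sub {f g : E → ℝ} (t : ℝ≥0) (x : E) (hf : Integrable f (S.P t x))
    (hg : Integrable g (S.P t x)) :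
    S.act t (fun y => f y - g y) x = S.act t f x - S.act t g x :=
  integral_sub hf hg

lemma Good.max0 {f : E → ℝ} (hf : S.Good f) : S.Good (fun y => max (f y) 0) :=
  ⟨hf.1.max measurable_const, fun t x => (hf.2 t x).pos_part⟩

lemma Good.neg {f : E → ℝ} (hf : S.Good f) : S.Good (fun y => -f y) :=
  ⟨hf.1.neg, fun t x => (hf.2 t x).neg⟩

lemma Good.sub {f g : E → ℝ} (hf : S.Good f) (hg : S.Good g) :
    S.Good (fun y => f y - g y) :=
  ⟨hf.1.sub hg.1, fun t x => (hf.2 t x).sub (hg.2 t x)⟩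

lemma Good.add {f g : E → ℝ} (hf : S.Good f) (hg : S.Good g) :
    S.Good (fun y => f y + g y) :=
  ⟨hf.1.add hg.1, fun t x => (hf.2 t x).add (hg.2 t x)⟩

lemma ofReal_abs_integral_le {μ : Measure E} {f : E → ℝ} (hf : Integrable f μ) :
    ENNReal.ofReal |∫ y, f y ∂μ| ≤ ∫⁻ y, ENNReal.ofReal |f y| ∂μ := by
  calc ENNReal.ofReal |∫ y, f y ∂μ| ≤ ENNReal.ofReal (∫ y, |f y| ∂μ) :=
        ENNReal.ofReal_le_ofReal (by simpa using norm_integral_le_integral_norm f)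
    _ = ∫⁻ y, ENNReal.ofReal |f y| ∂μ :=
        ofReal_integral_eq_lintegral_ofReal hf.abs (Eventually.of_forall fun y => abs_nonneg _)

lemma lintegral_ofReal_abs_lt_top {f : E → ℝ} (t : ℝ≥0) (x : E)
    (hf : Integrable f (S.P t x)) :
    ∫⁻ y, ENNReal.ofReal |f y| ∂(S.P t x) < ∞ := by
  have := hf.2
  rw [hasFiniteIntegral_iff_norm] at this
  simpa using this

lemma Good.act_measurable {f : E → ℝ} (hf : S.Good f) (s : ℝ≥0) :
    Measurable (S.act s f) := by
  have heq : (S.act s f) = fun x => (∫⁻ y, ENNReal.ofReal (f y) ∂(S.P s x)).toReal -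
      (∫⁻ y, ENNReal.ofReal (-f y) ∂(S.P s x)).toReal := by
    funext x
    exact integral_eq_lintegral_pos_part_sub_lintegral_neg_part (hf.2 s x)
  rw [heq]
  exact ((Measurable.lintegral_kernel (hf.1.ennreal_ofReal)).ennreal_toReal).sub
    ((Measurable.lintegral_kernel (hf.1.neg.ennreal_ofReal)).ennreal_toReal)

lemma Good.actGood {f : E → ℝ} (hf : S.Good f) (s : ℝ≥0) : S.Good (S.act s f) := by
  refine ⟨hf.act_measurable s, fun t x => ⟨(hf.act_measurable s).aestronglyMeasurable, ?_⟩⟩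
  rw [hasFiniteIntegral_iff_norm]
  have key : ∀ y, ENNReal.ofReal ‖S.act s f y‖ ≤ ∫⁻ z, ENNReal.ofReal |f z| ∂(S.P s y) := by
    intro y
    rw [Real.norm_eq_abs]
    exact ofReal_abs_integral_le (hf.2 s y)
  calc ∫⁻ y, ENNReal.ofReal ‖S.act s f y‖ ∂(S.P t x)
      ≤ ∫⁻ y, ∫⁻ z, ENNReal.ofReal |f z| ∂(S.P s y) ∂(S.P t x) := lintegral_mono key
    _ = ∫⁻ y, ENNReal.ofReal |f y| ∂(S.P (t + s) x) :=
        (S.map_add t s _ (hf.1.abs.ennreal_ofReal) x).symm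
    _ < ∞ := lintegral_ofReal_abs_lt_top (t + s) x (hf.2 (t + s) x)

lemma act_act_nonneg {f : E → ℝ} (hf : S.Good f) (hf0 : 0 ≤ f) (t s : ℝ≥0) (x : E) :
    S.act t (S.act s f) x = S.act (t + s) f x := by
  have h1 : 0 ≤ S.act s f := fun y => act_nonneg hf0 s y
  have h2 : ENNReal.ofReal (∫ y, S.act s f y ∂(S.P t x))
      = ENNReal.ofReal (∫ y, f y ∂(S.P (t + s) x)) := by
    rw [ofReal_integral_eq_lintegral_ofReal ((hf.actGood s).2 t x) (Eventually.of_forall h1),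
      ofReal_integral_eq_lintegral_ofReal (hf.2 (t + s) x) (Eventually.of_forall hf0),
      S.map_add t s _ hf.1.ennreal_ofReal x]
    congr 1
    funext y
    show ENNReal.ofReal (∫ z, f z ∂(S.P s y)) = _
    rw [ofReal_integral_eq_lintegral_ofReal (hf.2 s y) (Eventually.of_forall hf0)]
  exact (ENNReal.ofReal_eq_ofReal_iff (act_nonneg h1 t x) (act_nonneg hf0 (t+s) x)).mp h2

lemma act_act {f : E → ℝ} (hf : S.Good f) (t s : ℝ≥0) (x : E) :
    S.act t (S.act s f) x = S.act (t + s) f x := by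
  have hp : S.Good (fun y => max (f y) 0) := hf.max0
  have hn : S.Good (fun y => max (-f y) 0) := hf.neg.max0
  have hdec : ∀ y, f y = max (f y) 0 - max (-f y) 0 := by
    intro y; rcases le_total (f y) 0 with h | h
    · rw [max_eq_right h, max_eq_left (by linarith : (0:ℝ) ≤ -f y)]; ring
    · rw [max_eq_left h, max_eq_right (by linarith : -f y ≤ (0:ℝ))]; ring
  have hsplit : ∀ (r : ℝ≥0) (z : E), S.act r f z =
      S.act r (fun y => max (f y) 0) z - S.act r (fun y => max (-f y) 0) z := by
    intro r z
    rw [← act_sub r z (hp.2 r z) (hn.2 r z)]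
    congr 1; funext y; exact hdec y
  have h1 : S.act t (S.act s f) x
      = S.act t (S.act s (fun y => max (f y) 0)) x - S.act t (S.act s (fun y => max (-f y) 0)) x := by
    rw [← act_sub t x ((hp.actGood s).2 t x) ((hn.actGood s).2 t x)]
    congr 1; funext y; exact hsplit s y
  rw [h1, act_act_nonneg hp (fun y => le_max_right _ _) t s x,
    act_act_nonneg hn (fun y => le_max_right _ _) t s x, hsplit (t + s) x]

/-- Value of the scheme `u₁^τ` on a list of times. -/
noncomputable def gList (S : SubMarkovSemigroup E) (f : E → ℝ) : List ℝ≥0 → E → ℝ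
  | [] => fun _ => 0
  | [a] => fun x => S.act a (fun y => max (f y) 0) x
  | a :: b :: l => fun x =>
      S.act a (fun y => max (f y - S.act (b - a) f y) 0) x + gList S f (b :: l) x

lemma gList_nil (f : E → ℝ) (x : E) : gList S f ([]) x = 0 := rfl

lemma gList_single (f : E → ℝ) (a : ℝ≥0) (x : E) :
    gList S f ([a]) x = S.act a (fun y => max (f y) 0) x := rfl

lemma gList_cons_cons (f : E → ℝ) (a b : ℝ≥0) (l : List ℝ≥0) (x : E) :
    gList S f (a :: b :: l) x =
      S.act a (fun y => max (f y - S.act (b - a) f y) 0) x + gList S f (b :: l) x := rfl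

lemma gList_nonneg (f : E → ℝ) (l : List ℝ≥0) (x : E) : 0 ≤ gList S f l x := by
  induction l with
  | nil => exact le_rfl
  | cons a l ih =>
    cases l with
    | nil => exact act_nonneg (fun y => le_max_right _ _) a x
    | cons b l' =>
      rw [gList_cons_cons]
      exact add_nonneg (act_nonneg (fun y => le_max_right _ _) a x) ih

lemma gList_le_cons (f : E → ℝ) (a : ℝ≥0) (l : List ℝ≥0) (x : E) :
    gList S f l x ≤ gList S f (a :: l) x := by
  cases l with
  | nil => exact gList_nonneg f ([a]) x
  | cons b l' =>
    rw [gList_cons_cons]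
    exact le_add_of_nonneg_left (act_nonneg (fun y => le_max_right _ _) a x)

lemma key1 {f : E → ℝ} (hf : S.Good f) {a c : ℝ≥0} (hac : a ≤ c) (x : E) :
    S.act a (fun y => max (f y) 0) x ≤
      S.act a (fun y => max (f y - S.act (c - a) f y) 0) x
        + S.act c (fun y => max (f y) 0) x := by
  set δ := c - a with hδdef
  have hδ : a + δ = c := add_tsub_cancel_of_le hac
  have hterm : S.Good (fun y => max (f y - S.act δ f y) 0) := (hf.sub (hf.actGood δ)).max0
  have hmax0 : S.Good (fun y => max (f y) 0) := hf.max0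
  have hpt : ∀ y, max (f y) 0 ≤ max (f y - S.act δ f y) 0
      + S.act δ (fun z => max (f z) 0) y := by
    intro y
    have hle : S.act δ f y ≤ S.act δ (fun z => max (f z) 0) y :=
      act_mono δ y (hf.2 δ y) (hmax0.2 δ y) (fun z => le_max_left _ _)
    have h0 : 0 ≤ S.act δ (fun z => max (f z) 0) y :=
      act_nonneg (fun z => le_max_right _ _) δ y
    exact max_le (by linarith [le_max_left (f y - S.act δ f y) (0:ℝ)])
      (add_nonneg (le_max_right _ _) h0)
  calc S.act a (fun y => max (f y) 0) x
      ≤ S.act a (fun y => max (f y - S.act δ f y) 0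
          + S.act δ (fun z => max (f z) 0) y) x :=
        act_mono a x (hmax0.2 a x) ((hterm.2 a x).add ((hmax0.actGood δ).2 a x)) hpt
    _ = S.act a (fun y => max (f y - S.act δ f y) 0) x
          + S.act a (S.act δ (fun z => max (f z) 0)) x :=
        act_add a x (hterm.2 a x) ((hmax0.actGood δ).2 a x)
    _ = S.act a (fun y => max (f y - S.act δ f y) 0) x
          + S.act c (fun y => max (f y) 0) x := by
        rw [act_act_nonneg hmax0 (fun z => le_max_right _ _) a δ x, hδ]

lemma key2 {f : E → ℝ} (hf : S.Good f) {a c b : ℝ≥0} (hac : a ≤ c) (hcb : c ≤ b) (x : E) :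
    S.act a (fun y => max (f y - S.act (b - a) f y) 0) x ≤
      S.act a (fun y => max (f y - S.act (c - a) f y) 0) x
        + S.act c (fun y => max (f y - S.act (b - c) f y) 0) x := by
  set e := c - a with hedef
  have he : a + e = c := add_tsub_cancel_of_le hac
  have hsum : e + (b - c) = b - a := by
    rw [hedef, add_comm]
    exact tsub_add_tsub_cancel hcb hac
  have hh : S.Good (fun z => f z - S.act (b - c) f z) := hf.sub (hf.actGood (b - c))
  have hterm1 : S.Good (fun y => max (f y - S.act (e) f y) 0) := (hf.sub (hf.actGood e)).max0
  have h_inner : ∀ y, f y - S.act (b - a) f y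
      = (f y - S.act e f y) + S.act e (fun z => f z - S.act (b - c) f z) y := by
    intro y
    rw [act_sub e y (hf.2 e y) ((hf.actGood (b - c)).2 e y)]
    have h2 : S.act e (S.act (b - c) f) y = S.act (b - a) f y := by
      rw [act_act hf e (b - c) y, hsum]
    rw [h2]; ring
  have hpt : ∀ y, max (f y - S.act (b - a) f y) 0 ≤ max (f y - S.act e f y) 0
      + S.act e (fun z => max (f z - S.act (b - c) f z) 0) y := by
    intro y
    have hle : S.act e (fun z => f z - S.act (b - c) f z) y
        ≤ S.act e (fun z => max (f z - S.act (b - c) f z) 0) y :=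
      act_mono e y (hh.2 e y) (hh.max0.2 e y) (fun z => le_max_left _ _)
    have h0 : 0 ≤ S.act e (fun z => max (f z - S.act (b - c) f z) 0) y :=
      act_nonneg (fun z => le_max_right _ _) e y
    refine max_le ?_ (add_nonneg (le_max_right _ _) h0)
    rw [h_inner y]
    linarith [le_max_left (f y - S.act e f y) (0:ℝ)]
  calc S.act a (fun y => max (f y - S.act (b - a) f y) 0) x
      ≤ S.act a (fun y => max (f y - S.act e f y) 0
          + S.act e (fun z => max (f z - S.act (b - c) f z) 0) y) x :=
        act_mono a x ((hf.sub (hf.actGood (b-a))).max0.2 a x)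
          ((hterm1.2 a x).add ((hh.max0.actGood e).2 a x)) hpt
    _ = S.act a (fun y => max (f y - S.act e f y) 0) x
          + S.act a (S.act e (fun z => max (f z - S.act (b - c) f z) 0)) x :=
        act_add a x (hterm1.2 a x) ((hh.max0.actGood e).2 a x)
    _ = S.act a (fun y => max (f y - S.act e f y) 0) x
          + S.act c (fun y => max (f y - S.act (b - c) f y) 0) x := by
        rw [act_act_nonneg hh.max0 (fun z => le_max_right _ _) a e x, he]

lemma gList_cons_self {f : E → ℝ} (hf : S.Good f) (a : ℝ≥0) (l : List ℝ≥0) (x : E) :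
    gList S f (a :: a :: l) x = gList S f (a :: l) x := by
  rw [gList_cons_cons]
  have hzero : (fun y => max (f y - S.act (a - a) f y) 0) = fun _ => (0:ℝ) := by
    funext y; rw [tsub_self, act_zero hf.1]; simp
  rw [hzero]
  simp [SubMarkovSemigroup.act]

open List in
lemma gList_le_orderedInsert {f : E → ℝ} (hf : S.Good f) (c : ℝ≥0) (l : List ℝ≥0)
    (hl : l.Pairwise (· ≤ ·)) (x : E) :
    gList S f l x ≤ gList S f (l.orderedInsert (· ≤ ·) c) x := by
  induction l with
  | nil => exact gList_le_cons f c ([]) x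
  | cons a l ih =>
    by_cases h1 : c ≤ a
    · rw [List.orderedInsert, if_pos h1]
      exact gList_le_cons f c (a :: l) x
    · rw [List.orderedInsert, if_neg h1]
      have hac : a ≤ c := le_of_not_ge h1
      cases l with
      | nil =>
        rw [List.orderedInsert]
        rw [gList_single, gList_cons_cons, gList_single]
        exact key1 hf hac x
      | cons b l' =>
        have hbl : (b :: l').Pairwise (· ≤ ·) := (List.pairwise_cons.mp hl).2
        have hab : a ≤ b := (List.pairwise_cons.mp hl).1 b (List.mem_cons_self)
        by_cases h2 : c ≤ b
        · rw [List.orderedInsert, if_pos h2]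
          rw [gList_cons_cons, gList_cons_cons, gList_cons_cons]
          have := key2 hf hac h2 x
          linarith
        · rw [List.orderedInsert, if_neg h2]
          rw [gList_cons_cons, gList_cons_cons]
          have hIH := ih hbl
          rw [List.orderedInsert, if_neg h2] at hIH
          linarith

open List in
lemma sorted_foldr_orderedInsert (m : List ℝ≥0) (l : List ℝ≥0) (hl : l.Pairwise (· ≤ ·)) :
    (m.foldr (fun a acc => acc.orderedInsert (· ≤ ·) a) l).Pairwise (· ≤ ·) := by
  induction m with
  | nil => exact hl
  | cons a m ih => exact List.Pairwise.orderedInsert a _ ih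

open List in
lemma gList_le_foldr {f : E → ℝ} (hf : S.Good f) (m : List ℝ≥0) (l : List ℝ≥0)
    (hl : l.Pairwise (· ≤ ·)) (x : E) :
    gList S f l x ≤ gList S f (m.foldr (fun a acc => acc.orderedInsert (· ≤ ·) a) l) x := by
  induction m with
  | nil => exact le_rfl
  | cons a m ih =>
    refine le_trans ih ?_
    exact gList_le_orderedInsert hf a _ (sorted_foldr_orderedInsert m l hl) x

open List in
lemma mem_foldr_orderedInsert (m : List ℝ≥0) (l : List ℝ≥0) (a : ℝ≥0) :
    a ∈ m.foldr (fun a acc => acc.orderedInsert (· ≤ ·) a) l ↔ a ∈ m ∨ a ∈ l := by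
  induction m with
  | nil => simp
  | cons b m ih =>
    simp only [List.foldr, List.mem_orderedInsert, ih, List.mem_cons]
    tauto

lemma head_le_of_sorted_mem {l : List ℝ≥0} (hl : l.Pairwise (· ≤ ·)) {a : ℝ≥0}
    (ha : a ∈ l) (hne : l ≠ []) : l.head hne ≤ a := by
  cases l with
  | nil => exact absurd rfl hne
  | cons b t =>
    rcases List.mem_cons.mp ha with h | h
    · exact le_of_eq h.symm
    · exact (List.pairwise_cons.mp hl).1 a h

lemma gList_cons_head {f : E → ℝ} (a : ℝ≥0) (l : List ℝ≥0) (hne : l ≠ []) (x : E) :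
    gList S f (a :: l) x =
      S.act a (fun y => max (f y - S.act (l.head hne - a) f y) 0) x + gList S f l x := by
  cases l with
  | nil => exact absurd rfl hne
  | cons b t => rw [gList_cons_cons]; rfl

open List in
lemma gList_dedup {f : E → ℝ} (hf : S.Good f) (l : List ℝ≥0) (hl : l.Pairwise (· ≤ ·))
    (x : E) : gList S f l x = gList S f l.dedup x := by
  induction l with
  | nil => simp
  | cons a l ih =>
    have hll : l.Pairwise (· ≤ ·) := (List.pairwise_cons.mp hl).2
    by_cases hmem : a ∈ l
    · rw [List.dedup_cons_of_mem hmem, ← ih hll]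
      -- a ∈ l and sorted means head of l is a
      cases l with
      | nil => exact absurd hmem List.not_mem_nil
      | cons b t =>
        have hab : a ≤ b := (List.pairwise_cons.mp hl).1 b (List.mem_cons_self)
        have hba : b ≤ a := head_le_of_sorted_mem hll hmem (List.cons_ne_nil b t)
        have : a = b := le_antisymm hab hba
        subst this
        exact gList_cons_self hf a t x
    · rw [List.dedup_cons_of_notMem hmem]
      cases l with
      | nil => simp
      | cons b t =>
        have hdne : (b :: t).dedup ≠ [] := by
          intro h
          have : b ∈ (b :: t).dedup := List.mem_dedup.mpr (List.mem_cons_self)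
          rw [h] at this
          exact List.not_mem_nil this
        have hdsorted : (b :: t).dedup.Pairwise (· ≤ ·) :=
          hll.sublist (List.dedup_sublist _)
        have hhead : (b :: t).dedup.head hdne = b := by
          have h1 : (b :: t).dedup.head hdne ∈ (b :: t).dedup := List.head_mem hdne
          have h2 : (b :: t).dedup.head hdne ∈ b :: t := List.mem_dedup.mp h1
          have hb : b ∈ (b :: t).dedup := List.mem_dedup.mpr (List.mem_cons_self)
          exact le_antisymm (head_le_of_sorted_mem hdsorted hb hdne)
            (head_le_of_sorted_mem hll h2 (List.cons_ne_nil b t))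
        rw [gList_cons_head a (b :: t) (List.cons_ne_nil b t) x,
          gList_cons_head a ((b :: t).dedup) hdne x, hhead, ih hll]
        rfl

open List in
lemma gList_mono_subset {f : E → ℝ} (hf : S.Good f) {l₁ l₂ : List ℝ≥0}
    (h1 : l₁.Pairwise (· ≤ ·)) (h2 : l₂.Pairwise (· ≤ ·)) (hsub : ∀ a ∈ l₁, a ∈ l₂) (x : E) :
    gList S f l₁ x ≤ gList S f l₂ x := by
  set L := l₂.foldr (fun a acc => acc.orderedInsert (· ≤ ·) a) l₁ with hL
  have hLsorted : L.Pairwise (· ≤ ·) := sorted_foldr_orderedInsert l₂ l₁ h1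
  have step1 : gList S f l₁ x ≤ gList S f L x := gList_le_foldr hf l₂ l₁ h1 x
  have hmem : ∀ a, a ∈ L ↔ a ∈ l₂ := by
    intro a
    rw [hL, mem_foldr_orderedInsert]
    constructor
    · rintro (h | h)
      · exact h
      · exact hsub a h
    · exact Or.inl
  have hdedup_eq : L.dedup = l₂.dedup := by
    apply List.Perm.eq_of_pairwise' (hLsorted.sublist (List.dedup_sublist _))
      (h2.sublist (List.dedup_sublist _))
    apply List.perm_of_nodup_nodup_toFinset_eq (List.nodup_dedup _) (List.nodup_dedup _)
    ext a
    simp only [List.mem_toFinset, List.mem_dedup]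
    exact hmem a
  calc gList S f l₁ x ≤ gList S f L x := step1
    _ = gList S f L.dedup x := gList_dedup hf L hLsorted x
    _ = gList S f l₂.dedup x := by rw [hdedup_eq]
    _ = gList S f l₂ x := (gList_dedup hf l₂ h2 x).symm

lemma gList_ofFn {f : E → ℝ} :
    ∀ (m : ℕ) (v : Fin (m + 1) → ℝ≥0) (x : E),
    gList S f (List.ofFn v) x =
      (∑ i : Fin m, S.act (v i.castSucc)
          (fun y => max (f y - S.act (v i.succ - v i.castSucc) f y) 0) x)
        + S.act (v (Fin.last m)) (fun y => max (f y) 0) x := by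
  intro m
  induction m with
  | zero =>
    intro v x
    simp only [List.ofFn_succ, List.ofFn_zero, Finset.univ_eq_empty, Finset.sum_empty,
      zero_add]
    rw [gList_single]
    rfl
  | succ m ih =>
    intro v x
    rw [List.ofFn_succ]
    have hne : (List.ofFn fun i : Fin (m + 1) => v i.succ) ≠ [] := by simp
    have hhead : (List.ofFn fun i : Fin (m + 1) => v i.succ).head hne
        = v ((0 : Fin (m + 1)).succ) := by
      rw [List.head_ofFn]
      rfl
    rw [gList_cons_head (v 0) _ hne x, hhead, ih (fun i => v i.succ) x,
      Fin.sum_univ_succ]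
    simp only [Fin.castSucc_zero, ← Fin.succ_castSucc, Fin.succ_last]
    ring

end SubMarkovSemigroup

/-- A finite partition `0 = t_0 ≤ t_1 ≤ … ≤ t_n < ∞` of `ℝ₊`. -/
structure FinPartition where
  n : ℕ
  t : Fin (n + 1) → ℝ≥0
  mono : Monotone t
  first : t 0 = 0

/-- `V_τ(u) = Σ_{i=1}^n P_{t_{i-1}} |u - P_{t_i - t_{i-1}} u| + P_{t_n}|u|`. -/
noncomputable def SubMarkovSemigroup.V {E : Type*} [MeasurableSpace E]
    (S : SubMarkovSemigroup E) (u : E → ℝ) (τ : FinPartition) (x : E) : ℝ :=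
  (∑ i : Fin τ.n, S.act (τ.t i.castSucc)
      (fun y => |u y - S.act (τ.t i.succ - τ.t i.castSucc) u y|) x)
  + S.act (τ.t (Fin.last τ.n)) (fun y => |u y|) x

/-- `u₁^τ = Σ_{i=1}^n P_{t_{i-1}} (u - P_{t_i - t_{i-1}} u)⁺ + P_{t_n} u⁺`. -/
noncomputable def SubMarkovSemigroup.uPos {E : Type*} [MeasurableSpace E]
    (S : SubMarkovSemigroup E) (u : E → ℝ) (τ : FinPartition) (x : E) : ℝ :=
  (∑ i : Fin τ.n, S.act (τ.t i.castSucc)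
      (fun y => max (u y - S.act (τ.t i.succ - τ.t i.castSucc) u y) 0) x)
  + S.act (τ.t (Fin.last τ.n)) (fun y => max (u y) 0) x

/-- `u₂^τ = Σ_{i=1}^n P_{t_{i-1}} (u - P_{t_i - t_{i-1}} u)⁻ + P_{t_n} u⁻`. -/
noncomputable def SubMarkovSemigroup.uNeg {E : Type*} [MeasurableSpace E]
    (S : SubMarkovSemigroup E) (u : E → ℝ) (τ : FinPartition) (x : E) : ℝ :=
  (∑ i : Fin τ.n, S.act (τ.t i.castSucc)
      (fun y => max (-(u y - S.act (τ.t i.succ - τ.t i.castSucc) u y)) 0) x)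
  + S.act (τ.t (Fin.last τ.n)) (fun y => max (-u y) 0) x

/-- A sequence of finite partitions of `ℝ₊` is admissible if it is increasing, the union
of the partition points is dense in `ℝ₊`, and it is stable under translation by its
points: if `r` is a point of some `τ_k`, then `r + τ_n ⊆ ∪_k τ_k` for all `n`. -/
def Admissible (τ : ℕ → FinPartition) : Prop :=
  (∀ n : ℕ, Set.range (τ n).t ⊆ Set.range (τ (n + 1)).t) ∧
  Dense (⋃ k : ℕ, Set.range (τ k).t) ∧
  (∀ r ∈ ⋃ k : ℕ, Set.range (τ k).t, ∀ (n : ℕ) (i : Fin ((τ n).n + 1)),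
    r + (τ n).t i ∈ ⋃ k : ℕ, Set.range (τ k).t)

namespace SubMarkovSemigroup
variable {E : Type*} [MeasurableSpace E] {S : SubMarkovSemigroup E}

lemma sorted_ofFn (τ : FinPartition) : (List.ofFn τ.t).Pairwise (· ≤ ·) :=
  List.sortedLE_iff_pairwise.mp (List.sortedLE_ofFn_iff.mpr τ.mono)

lemma uPos_eq_gList (u : E → ℝ) (τ : FinPartition) (x : E) :
    S.uPos u τ x = gList S u (List.ofFn τ.t) x := (gList_ofFn τ.n τ.t x).symm

lemma uPos_nonneg (u : E → ℝ) (τ : FinPartition) (x : E) : 0 ≤ S.uPos u τ x := by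
  rw [uPos_eq_gList]; exact gList_nonneg u _ x

lemma uPos_mono_subset {u : E → ℝ} (hu : S.Good u) {σ τ : FinPartition}
    (h : Set.range σ.t ⊆ Set.range τ.t) (x : E) : S.uPos u σ x ≤ S.uPos u τ x := by
  rw [uPos_eq_gList, uPos_eq_gList]
  refine gList_mono_subset hu (sorted_ofFn σ) (sorted_ofFn τ) ?_ x
  intro a ha
  rw [List.mem_ofFn] at ha ⊢
  exact h ha

lemma act_neg (t : ℝ≥0) (g : E → ℝ) (y : E) :
    S.act t (fun z => -g z) y = -S.act t g y := integral_neg _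

lemma uNeg_eq_uPos_neg (u : E → ℝ) (τ : FinPartition) (x : E) :
    S.uNeg u τ x = S.uPos (fun y => -u y) τ x := by
  unfold SubMarkovSemigroup.uNeg SubMarkovSemigroup.uPos
  congr 1
  · apply Finset.sum_congr rfl
    intro i _
    congr 1
    funext y
    rw [act_neg]
    ring_nf

lemma uNeg_nonneg (u : E → ℝ) (τ : FinPartition) (x : E) : 0 ≤ S.uNeg u τ x := by
  rw [uNeg_eq_uPos_neg]; exact uPos_nonneg _ τ x

lemma act_abs_split {h : E → ℝ} (hh : S.Good h) (a : ℝ≥0) (x : E) :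
    S.act a (fun y => |h y|) x
      = S.act a (fun y => max (h y) 0) x + S.act a (fun y => max (-h y) 0) x := by
  rw [← act_add a x (hh.max0.2 a x) (hh.neg.max0.2 a x)]
  congr 1
  funext y
  exact (max_zero_add_max_neg_zero_eq_abs_self (h y)).symm

lemma V_eq_uPos_add_uNeg {u : E → ℝ} (hu : S.Good u) (τ : FinPartition) (x : E) :
    S.V u τ x = S.uPos u τ x + S.uNeg u τ x := by
  unfold SubMarkovSemigroup.V SubMarkovSemigroup.uPos SubMarkovSemigroup.uNeg
  have hterm : ∀ i : Fin τ.n,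
      S.act (τ.t i.castSucc)
        (fun y => |u y - S.act (τ.t i.succ - τ.t i.castSucc) u y|) x
      = S.act (τ.t i.castSucc)
          (fun y => max (u y - S.act (τ.t i.succ - τ.t i.castSucc) u y) 0) x
        + S.act (τ.t i.castSucc)
          (fun y => max (-(u y - S.act (τ.t i.succ - τ.t i.castSucc) u y)) 0) x := by
    intro i
    exact act_abs_split (hu.sub (hu.actGood _)) _ x
  have hlast : S.act (τ.t (Fin.last τ.n)) (fun y => |u y|) x
      = S.act (τ.t (Fin.last τ.n)) (fun y => max (u y) 0) x
        + S.act (τ.t (Fin.last τ.n)) (fun y => max (-u y) 0) x := act_abs_split hu _ x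
  rw [Finset.sum_congr rfl (fun i _ => hterm i), Finset.sum_add_distrib, hlast]
  ring

lemma act_pos_sub_neg {h : E → ℝ} (hh : S.Good h) (a : ℝ≥0) (x : E) :
    S.act a (fun y => max (h y) 0) x - S.act a (fun y => max (-h y) 0) x
      = S.act a h x := by
  rw [← act_sub a x (hh.max0.2 a x) (hh.neg.max0.2 a x)]
  congr 1
  funext y
  rcases le_total (h y) 0 with hy | hy
  · rw [max_eq_right hy, max_eq_left (by linarith : (0:ℝ) ≤ -h y)]; ring
  · rw [max_eq_left hy, max_eq_right (by linarith : -h y ≤ (0:ℝ))]; ring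

lemma fin_telescope : ∀ (n : ℕ) (φ : Fin (n + 1) → ℝ),
    ∑ i : Fin n, (φ i.castSucc - φ i.succ) = φ 0 - φ (Fin.last n) := by
  intro n
  induction n with
  | zero => intro φ; simp [Fin.last]
  | succ n ih =>
    intro φ
    rw [Fin.sum_univ_succ]
    have e1 : ∀ i : Fin n, φ (i.succ).castSucc - φ (i.succ).succ
        = (fun j : Fin (n + 1) => φ j.succ) i.castSucc
          - (fun j : Fin (n + 1) => φ j.succ) i.succ := by
      intro i
      rw [← Fin.succ_castSucc]
    rw [Finset.sum_congr rfl (fun i _ => e1 i), ih (fun j => φ j.succ)]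
    rw [Fin.castSucc_zero, Fin.succ_last]
    ring

lemma uPos_sub_uNeg {u : E → ℝ} (hu : S.Good u) (τ : FinPartition) (x : E) :
    S.uPos u τ x - S.uNeg u τ x = u x := by
  unfold SubMarkovSemigroup.uPos SubMarkovSemigroup.uNeg
  have hterm : ∀ i : Fin τ.n,
      S.act (τ.t i.castSucc)
        (fun y => max (u y - S.act (τ.t i.succ - τ.t i.castSucc) u y) 0) x
      - S.act (τ.t i.castSucc)
        (fun y => max (-(u y - S.act (τ.t i.succ - τ.t i.castSucc) u y)) 0) x
      = S.act (τ.t i.castSucc) u x - S.act (τ.t i.succ) u x := by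
    intro i
    rw [act_pos_sub_neg (hu.sub (hu.actGood _)) _ x,
      act_sub _ x (hu.2 _ x) ((hu.actGood _).2 _ x)]
    congr 1
    show S.act (τ.t i.castSucc) (S.act (τ.t i.succ - τ.t i.castSucc) u) x = _
    rw [act_act hu _ _ x, add_tsub_cancel_of_le (τ.mono (Fin.castSucc_le_succ i))]
  have hlastterm : S.act (τ.t (Fin.last τ.n)) (fun y => max (u y) 0) x
      - S.act (τ.t (Fin.last τ.n)) (fun y => max (-u y) 0) x
      = S.act (τ.t (Fin.last τ.n)) u x := act_pos_sub_neg hu _ x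
  have hsum : ∑ i : Fin τ.n, (S.act (τ.t i.castSucc) u x - S.act (τ.t i.succ) u x)
      = S.act (τ.t 0) u x - S.act (τ.t (Fin.last τ.n)) u x :=
    fin_telescope τ.n (fun j => S.act (τ.t j) u x)
  have expand : (∑ i : Fin τ.n, S.act (τ.t i.castSucc)
      (fun y => max (u y - S.act (τ.t i.succ - τ.t i.castSucc) u y) 0) x)
      - (∑ i : Fin τ.n, S.act (τ.t i.castSucc)
      (fun y => max (-(u y - S.act (τ.t i.succ - τ.t i.castSucc) u y)) 0) x)
      = ∑ i : Fin τ.n, (S.act (τ.t i.castSucc) u x - S.act (τ.t i.succ) u x) := by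
    rw [← Finset.sum_sub_distrib]
    exact Finset.sum_congr rfl (fun i _ => hterm i)
  have : S.act (τ.t 0) u x = u x := by
    rw [τ.first]
    exact act_zero hu.1 x
  linarith [hsum, expand, hlastterm]

lemma good_uPos {u : E → ℝ} (hu : S.Good u) (τ : FinPartition) : S.Good (S.uPos u τ) := by
  have hterm : ∀ i : Fin τ.n, S.Good (S.act (τ.t i.castSucc)
      (fun y => max (u y - S.act (τ.t i.succ - τ.t i.castSucc) u y) 0)) :=
    fun i => ((hu.sub (hu.actGood _)).max0).actGood _
  have hlast : S.Good (S.act (τ.t (Fin.last τ.n)) (fun y => max (u y) 0)) :=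
    (hu.max0).actGood _
  constructor
  · exact (Finset.measurable_sum _ (fun i _ => (hterm i).1)).add hlast.1
  · intro t x
    exact (integrable_finset_sum _ (fun i _ => (hterm i).2 t x)).add (hlast.2 t x)

/-- `P_r (u₁^τ) = gList` of the shifted partition list. -/
lemma act_uPos_eq_gList {u : E → ℝ} (hu : S.Good u) (r : ℝ≥0) (τ : FinPartition) (x : E) :
    S.act r (S.uPos u τ) x = gList S u (List.ofFn (fun i => r + τ.t i)) x := by
  have hterm : ∀ i : Fin τ.n, S.Good
      (fun y => max (u y - S.act (τ.t i.succ - τ.t i.castSucc) u y) 0) :=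
    fun i => (hu.sub (hu.actGood _)).max0
  have step1 : S.act r (S.uPos u τ) x
      = (∑ i : Fin τ.n, S.act r (S.act (τ.t i.castSucc)
          (fun y => max (u y - S.act (τ.t i.succ - τ.t i.castSucc) u y) 0)) x)
        + S.act r (S.act (τ.t (Fin.last τ.n)) (fun y => max (u y) 0)) x := by
    show ∫ y, S.uPos u τ y ∂(S.P r x) = _
    unfold SubMarkovSemigroup.uPos
    rw [integral_add (integrable_finset_sum _
        (fun i _ => (((hterm i).actGood _).2 r x))) (((hu.max0).actGood _).2 r x),
      integral_finset_sum _ (fun i _ => (((hterm i).actGood _).2 r x))]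
    rfl
  rw [step1, gList_ofFn τ.n (fun i => r + τ.t i) x]
  congr 1
  · apply Finset.sum_congr rfl
    intro i _
    rw [act_act_nonneg (hterm i) (fun y => le_max_right _ _) r _ x]
    congr 2
    rw [add_tsub_add_eq_tsub_left]
  · rw [act_act_nonneg (hu.max0) (fun y => le_max_right _ _) r _ x]

lemma range_chain {τ : ℕ → FinPartition}
    (h : ∀ n : ℕ, Set.range (τ n).t ⊆ Set.range (τ (n + 1)).t) :
    ∀ {k m : ℕ}, k ≤ m → Set.range (τ k).t ⊆ Set.range (τ m).t := by
  intro k m hkm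
  induction m with
  | zero => rw [Nat.le_zero.mp hkm]
  | succ m ih =>
    rcases Nat.lt_or_ge k (m + 1) with hlt | hge
    · exact (ih (Nat.lt_succ_iff.mp hlt)).trans (h m)
    · rw [le_antisymm hkm hge]

lemma uPos_seq_mono {u : E → ℝ} (hu : S.Good u) {τ : ℕ → FinPartition}
    (h : ∀ n : ℕ, Set.range (τ n).t ⊆ Set.range (τ (n + 1)).t) (x : E) :
    Monotone (fun n => S.uPos u (τ n) x) := by
  apply monotone_nat_of_le_succ
  intro n
  exact uPos_mono_subset hu (h n) x

/-- Part (b) master lemma for `uPos`. -/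
lemma partB_master {u : E → ℝ} (hu : S.Good u) {τ : ℕ → FinPartition}
    (hτ : Admissible τ) {r : ℝ≥0} (hr : r ∈ ⋃ k : ℕ, Set.range (τ k).t) (x : E) :
    (∫⁻ y, ⨆ n : ℕ, ENNReal.ofReal (S.uPos u (τ n) y) ∂(S.P r x))
      ≤ ⨆ n : ℕ, ENNReal.ofReal (S.uPos u (τ n) x) := by
  have hmeas : ∀ n : ℕ, Measurable (fun y => ENNReal.ofReal (S.uPos u (τ n) y)) :=
    fun n => (good_uPos hu (τ n)).1.ennreal_ofReal
  have hmono : Monotone (fun n => fun y => ENNReal.ofReal (S.uPos u (τ n) y)) := by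
    intro a b hab y
    exact ENNReal.ofReal_le_ofReal (uPos_seq_mono hu hτ.1 y hab)
  rw [lintegral_iSup hmeas hmono]
  apply iSup_le
  intro n
  have heq : (∫⁻ y, ENNReal.ofReal (S.uPos u (τ n) y) ∂(S.P r x))
      = ENNReal.ofReal (S.act r (S.uPos u (τ n)) x) :=
    (ofReal_integral_eq_lintegral_ofReal ((good_uPos hu (τ n)).2 r x)
      (Eventually.of_forall (fun y => uPos_nonneg u (τ n) y))).symm
  rw [heq]
  -- find a partition τ m containing 0 and all points r + τn.t i
  have hpts : ∀ i : Fin ((τ n).n + 1), ∃ k : ℕ, r + (τ n).t i ∈ Set.range (τ k).t := by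
    intro i
    have := hτ.2.2 r hr n i
    exact Set.mem_iUnion.mp this
  choose K hK using hpts
  set m := Finset.univ.sup K with hm
  have hKm : ∀ i, K i ≤ m := fun i => Finset.le_sup (Finset.mem_univ i)
  have hsub : ∀ a ∈ (0 : ℝ≥0) :: List.ofFn (fun i => r + (τ n).t i),
      a ∈ List.ofFn (τ m).t := by
    intro a ha
    rw [List.mem_ofFn]
    rcases List.mem_cons.mp ha with h0 | hmem
    · exact h0 ▸ ⟨0, (τ m).first⟩
    · rw [List.mem_ofFn] at hmem
      obtain ⟨i, hi⟩ := hmem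
      exact hi ▸ range_chain hτ.1 (hKm i) (hK i)
  have hsorted : ((0 : ℝ≥0) :: List.ofFn (fun i => r + (τ n).t i)).Pairwise (· ≤ ·) := by
    rw [List.pairwise_cons]
    refine ⟨fun b _ => zero_le, ?_⟩
    exact List.sortedLE_iff_pairwise.mp (List.sortedLE_ofFn_iff.mpr (fun i j hij => add_le_add_right ((τ n).mono hij) r))
  calc ENNReal.ofReal (S.act r (S.uPos u (τ n)) x)
      = ENNReal.ofReal (gList S u (List.ofFn (fun i => r + (τ n).t i)) x) := by
        rw [act_uPos_eq_gList hu r (τ n) x]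
    _ ≤ ENNReal.ofReal (gList S u ((0 : ℝ≥0) :: List.ofFn (fun i => r + (τ n).t i)) x) :=
        ENNReal.ofReal_le_ofReal (gList_le_cons u 0 _ x)
    _ ≤ ENNReal.ofReal (gList S u (List.ofFn (τ m).t) x) :=
        ENNReal.ofReal_le_ofReal (gList_mono_subset hu hsorted (sorted_ofFn (τ m)) hsub x)
    _ = ENNReal.ofReal (S.uPos u (τ m) x) := by rw [uPos_eq_gList]
    _ ≤ ⨆ n : ℕ, ENNReal.ofReal (S.uPos u (τ n) x) := le_iSup
        (fun n => ENNReal.ofReal (S.uPos u (τ n) x)) m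

lemma real_max_id (a : ℝ) : a + max (-a) 0 = max a 0 := by
  rcases le_total a 0 with h | h
  · rw [max_eq_left (neg_nonneg.mpr h), max_eq_right h]; ring
  · rw [max_eq_right (neg_nonpos.mpr h), max_eq_left h]; ring

end SubMarkovSemigroup

open SubMarkovSemigroup in
/-- For an admissible sequence `(τ_n)` and `u_i := sup_n u_i^{τ_n}`:
(a) `u₁ + u₂ = sup_n V_{τ_n}(u)` pointwise; (b) `P_r u_i ≤ u_i` for every partition point
`r`; (c) `u = u₁ - u₂` on `{sup_n V_{τ_n}(u) < ∞}`. -/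
theorem statement4 {E : Type*} [MeasurableSpace E] (S : SubMarkovSemigroup E)
    (u : E → ℝ) (hu : Measurable u) (hint : ∀ (t : ℝ≥0) (x : E), Integrable u (S.P t x))
    (τ : ℕ → FinPartition) (hτ : Admissible τ)
    (u₁ u₂ : E → ℝ≥0∞)
    (hu₁ : u₁ = fun x => ⨆ n : ℕ, ENNReal.ofReal (S.uPos u (τ n) x))
    (hu₂ : u₂ = fun x => ⨆ n : ℕ, ENNReal.ofReal (S.uNeg u (τ n) x)) :
    (∀ x : E, u₁ x + u₂ x = ⨆ n : ℕ, ENNReal.ofReal (S.V u (τ n) x)) ∧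
    (∀ r ∈ ⋃ k : ℕ, Set.range (τ k).t, ∀ x : E,
      (∫⁻ y, u₁ y ∂(S.P r x)) ≤ u₁ x ∧ (∫⁻ y, u₂ y ∂(S.P r x)) ≤ u₂ x) ∧
    (∀ x : E, (⨆ n : ℕ, ENNReal.ofReal (S.V u (τ n) x)) < ∞ →
      u x = (u₁ x).toReal - (u₂ x).toReal) := by
  have hGood : S.Good u := ⟨hu, hint⟩
  have hGoodN : S.Good (fun y => -u y) := hGood.neg
  have hu₁' : ∀ x, u₁ x = ⨆ n : ℕ, ENNReal.ofReal (S.uPos u (τ n) x) := by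
    intro x; rw [hu₁]
  have hu₂' : ∀ x, u₂ x = ⨆ n : ℕ, ENNReal.ofReal (S.uPos (fun y => -u y) (τ n) x) := by
    intro x; rw [hu₂]
    simp only [uNeg_eq_uPos_neg]
  have hmono1 : ∀ x, Monotone fun n => ENNReal.ofReal (S.uPos u (τ n) x) := by
    intro x a b hab
    exact ENNReal.ofReal_le_ofReal (uPos_seq_mono hGood hτ.1 x hab)
  have hmono2 : ∀ x, Monotone fun n => ENNReal.ofReal (S.uPos (fun y => -u y) (τ n) x) := by
    intro x a b hab
    exact ENNReal.ofReal_le_ofReal (uPos_seq_mono hGoodN hτ.1 x hab)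
  have partA : ∀ x : E, u₁ x + u₂ x = ⨆ n : ℕ, ENNReal.ofReal (S.V u (τ n) x) := by
    intro x
    rw [hu₁' x, hu₂' x, ENNReal.iSup_add_iSup_of_monotone (hmono1 x) (hmono2 x)]
    apply iSup_congr
    intro n
    rw [V_eq_uPos_add_uNeg hGood (τ n) x, ENNReal.ofReal_add (uPos_nonneg u (τ n) x)
      (uNeg_nonneg u (τ n) x), uNeg_eq_uPos_neg]
  refine ⟨partA, ?_, ?_⟩
  · intro r hr x
    constructor
    · simp only [hu₁']
      exact partB_master hGood hτ hr x
    · simp only [hu₂']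
      exact partB_master hGoodN hτ hr x
  · intro x hfin
    have hsum := partA x
    have hne1 : u₁ x ≠ ∞ := by
      intro h
      rw [← hsum] at hfin
      exact absurd (by rw [h]; simp : u₁ x + u₂ x = ∞) (ne_of_lt hfin)
    have hne2 : u₂ x ≠ ∞ := by
      intro h
      rw [← hsum] at hfin
      exact absurd (by rw [h]; simp : u₁ x + u₂ x = ∞) (ne_of_lt hfin)
    have hid : ∀ n : ℕ, S.uPos u (τ n) x + max (-u x) 0 = S.uNeg u (τ n) x + max (u x) 0 := by
      intro n
      have h1 := uPos_sub_uNeg hGood (τ n) x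
      have h2 := real_max_id (u x)
      linarith
    have hsum1 : u₁ x + ENNReal.ofReal (max (-u x) 0)
        = u₂ x + ENNReal.ofReal (max (u x) 0) := by
      rw [hu₁' x, hu₂' x, ENNReal.iSup_add, ENNReal.iSup_add]
      apply iSup_congr
      intro n
      rw [← ENNReal.ofReal_add (uPos_nonneg u (τ n) x) (le_max_right _ _), hid n,
        ENNReal.ofReal_add (uNeg_nonneg u (τ n) x) (le_max_right _ _), uNeg_eq_uPos_neg]
    have htr := congrArg ENNReal.toReal hsum1
    rw [ENNReal.toReal_add hne1 ENNReal.ofReal_ne_top,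
      ENNReal.toReal_add hne2 ENNReal.ofReal_ne_top,
      ENNReal.toReal_ofReal (le_max_right _ _), ENNReal.toReal_ofReal (le_max_right _ _)]
      at htr
    have h2 := real_max_id (u x)
    linarith
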